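/- Let α > -1 and β ∈ ℝ, and set ρ_{α,β} = α+β+1. For λ real with λ ≠ 0, the function Ψ_λ^{α,β}(t) = (2 sinh t)^{iλ-ρ_{α,β}} ₂F₁((ρ_{α,β}-iλ)/2, (β-α+1-iλ)/2; 1-iλ; -1/sinh²t) satisfies: there exists C > 0 such that for all t ≥ 1, Ψ_λ^{α,β}(t) = e^{(iλ-ρ_{α,β})t}(1 + e^{-2t}Θ_λ(t)) with |Θ_λ(t)| ≤ C. -/

import Mathlib

open Polynomial

/-- The Gauss hypergeometric function `₂F₁(a,b;c;z) = Σ (a)_k (b)_k / ((c)_k k!) z^k`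
(interpreted by its series / analytic continuation). -/
noncomputable def F21 (a b c z : ℂ) : ℂ :=
  ∑' k : ℕ, (Polynomial.eval a (ascPochhammer ℂ k) *
      Polynomial.eval b (ascPochhammer ℂ k) /
        (Polynomial.eval c (ascPochhammer ℂ k) * (k.factorial : ℂ))) * z ^ k

/-- The second Jacobi solution
`Ψ_λ^(α,β)(t) = (2 sinh t)^(iλ-ρ_{α,β}) ₂F₁((ρ_{α,β}-iλ)/2, (β-α+1-iλ)/2; 1-iλ; -1/sinh²t)`
with `ρ_{α,β} = α+β+1`. -/
noncomputable def PsiJac (α β : ℝ) (lam : ℂ) (t : ℝ) : ℂ :=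
  ((2 * Real.sinh t : ℝ) : ℂ) ^ (Complex.I * lam - ((α : ℂ) + β + 1)) *
    F21 ((((α : ℂ) + β + 1) - Complex.I * lam) / 2)
      (((β : ℂ) - α + 1 - Complex.I * lam) / 2) (1 - Complex.I * lam)
      (-(1 / ((Real.sinh t : ℂ)) ^ 2))

lemma asc_nonneg (x : ℝ) (hx : 0 ≤ x) (k : ℕ) : 0 ≤ eval x (ascPochhammer ℝ k) := by
  induction k with
  | zero => simp
  | succ n ih =>
    rw [ascPochhammer_succ_right]
    simp only [eval_mul, eval_add, eval_X, eval_natCast]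
    positivity

lemma norm_asc_le (a : ℂ) (k : ℕ) :
    ‖eval a (ascPochhammer ℂ k)‖ ≤ eval ‖a‖ (ascPochhammer ℝ k) := by
  induction k with
  | zero => simp
  | succ n ih =>
    rw [ascPochhammer_succ_right, ascPochhammer_succ_right]
    simp only [eval_mul, eval_add, eval_X, eval_natCast, norm_mul]
    have h1 : ‖a + (n:ℂ)‖ ≤ ‖a‖ + n := by
      calc ‖a + (n:ℂ)‖ ≤ ‖a‖ + ‖(n:ℂ)‖ := norm_add_le _ _
      _ = ‖a‖ + n := by simp
    exact mul_le_mul ih h1 (norm_nonneg _) (asc_nonneg _ (norm_nonneg a) n)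

lemma norm_asc_c_ge (lam : ℝ) (k : ℕ) :
    (k.factorial : ℝ) ≤ ‖eval (1 - Complex.I * lam) (ascPochhammer ℂ k)‖ := by
  induction k with
  | zero => simp
  | succ n ih =>
    rw [ascPochhammer_succ_right]
    simp only [eval_mul, eval_add, eval_X, eval_natCast, norm_mul]
    have h1 : ((n:ℝ) + 1) ≤ ‖1 - Complex.I * lam + (n:ℂ)‖ := by
      have := Complex.abs_re_le_norm (1 - Complex.I * lam + (n:ℂ))
      have hre : (1 - Complex.I * lam + (n:ℂ)).re = 1 + n := by simp
      rw [hre] at this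
      calc ((n:ℝ)+1) = |1 + (n:ℝ)| := by rw [abs_of_nonneg (by positivity)]; ring
      _ ≤ _ := this
    calc ((n+1).factorial : ℝ) = (n.factorial : ℝ) * ((n:ℝ)+1) := by
          rw [Nat.factorial_succ]; push_cast; ring
    _ ≤ _ := mul_le_mul ih h1 (by positivity) (norm_nonneg _)

lemma norm_cexp_sub_one_le (w : ℂ) : ‖Complex.exp w - 1‖ ≤ ‖w‖ * Real.exp ‖w‖ := by
  have hderiv : ∀ r ∈ Set.Icc (0:ℝ) 1,
      HasDerivWithinAt (fun r : ℝ => Complex.exp (r * w))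
        (Complex.exp (r * w) * w) (Set.Icc 0 1) r := by
    intro r _
    have h1 : HasDerivAt (fun u : ℂ => Complex.exp (u * w))
        (Complex.exp ((r:ℂ) * w) * w) (r:ℂ) :=
      by simpa using ((hasDerivAt_id (r:ℂ)).mul_const w).cexp
    exact (h1.comp_ofReal).hasDerivWithinAt
  have hbound : ∀ r ∈ Set.Icc (0:ℝ) 1,
      ‖Complex.exp (r * w) * w‖ ≤ Real.exp ‖w‖ * ‖w‖ := by
    intro r hr
    rw [norm_mul]
    have : ‖Complex.exp ((r:ℂ) * w)‖ ≤ Real.exp ‖w‖ := by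
      rw [Complex.norm_exp]
      apply Real.exp_le_exp.2
      have : ((r:ℂ) * w).re = r * w.re := by simp
      rw [this]
      calc r * w.re ≤ |r * w.re| := le_abs_self _
      _ = |r| * |w.re| := abs_mul _ _
      _ ≤ 1 * ‖w‖ := by
          apply mul_le_mul (by rw [abs_of_nonneg hr.1]; exact hr.2)
            (Complex.abs_re_le_norm w) (abs_nonneg _) zero_le_one
      _ = ‖w‖ := one_mul _
    exact mul_le_mul_of_nonneg_right this (norm_nonneg _)
  have := (convex_Icc (0:ℝ) 1).norm_image_sub_le_of_norm_hasDerivWithin_le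
    hderiv hbound (Set.left_mem_Icc.2 zero_le_one) (Set.right_mem_Icc.2 zero_le_one)
  simp only [Complex.ofReal_one, Complex.ofReal_zero, one_mul, zero_mul,
    Complex.exp_zero] at this
  calc ‖Complex.exp w - 1‖ ≤ Real.exp ‖w‖ * ‖w‖ := by simpa using this
  _ = ‖w‖ * Real.exp ‖w‖ := mul_comm _ _


lemma summable_aux (A B q0 q' : ℝ) (hA0 : 0 ≤ A) (hB0 : 0 ≤ B) (hq0pos : 0 < q0)
    (hq0q' : q0 < q') (hq'lt : q' < 1) (e : ℕ → ℝ) (he0 : ∀ k, 0 ≤ e k)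
    (herec : ∀ k : ℕ, e (k+1) = e k * ((A + k) * (B + k) / (((k:ℝ)+1) * ((k:ℝ)+1)))) :
    Summable (fun k => e k * q0 ^ k) := by
  apply summable_of_ratio_norm_eventually_le hq'lt
  rw [Filter.eventually_atTop]
  refine ⟨⌈q0 * (A + B + A*B) / (q' - q0)⌉₊, fun k hk => ?_⟩
  have hk0 : (0:ℝ) ≤ (k:ℝ) := Nat.cast_nonneg k
  have hk1 : q0 * (A + B + A*B) / (q' - q0) ≤ (k:ℝ) := by
    calc q0 * (A + B + A*B) / (q' - q0) ≤ (⌈q0 * (A + B + A*B) / (q' - q0)⌉₊ : ℝ) :=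
          Nat.le_ceil _
    _ ≤ (k:ℝ) := by exact_mod_cast Nat.cast_le.2 hk
  have hratio : q0 * ((A + k) * (B + k)) ≤ q' * (((k:ℝ)+1) * ((k:ℝ)+1)) := by
    have h1 : (A + k) * (B + k) ≤ ((k:ℝ)+1) * ((k:ℝ)+1) + (A + B + A*B) * ((k:ℝ)+1) := by
      nlinarith [mul_nonneg (mul_nonneg hA0 hB0) hk0]
    have h3 : q0 * (A + B + A*B) ≤ (q' - q0) * ((k:ℝ)+1) := by
      rw [div_le_iff₀ (by linarith)] at hk1
      nlinarith
    have h2 : q0 * ((A + B + A*B) * ((k:ℝ)+1)) ≤ (q' - q0) * (((k:ℝ)+1) * ((k:ℝ)+1)) := by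
      calc q0 * ((A + B + A*B) * ((k:ℝ)+1)) = (q0 * (A + B + A*B)) * ((k:ℝ)+1) := by ring
      _ ≤ ((q' - q0) * ((k:ℝ)+1)) * ((k:ℝ)+1) :=
          mul_le_mul_of_nonneg_right h3 (by linarith)
      _ = (q' - q0) * (((k:ℝ)+1) * ((k:ℝ)+1)) := by ring
    nlinarith [mul_le_mul_of_nonneg_left h1 (le_of_lt hq0pos)]
  have hek : 0 ≤ e k * q0 ^ k := mul_nonneg (he0 k) (by positivity)
  rw [Real.norm_of_nonneg (mul_nonneg (he0 _) (by positivity)),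
      Real.norm_of_nonneg hek]
  rw [herec k]
  have heq : e k * ((A + k) * (B + k) / (((k:ℝ)+1) * ((k:ℝ)+1))) * q0 ^ (k+1)
      = (e k * q0 ^ k) * (q0 * ((A + k) * (B + k)) / (((k:ℝ)+1) * ((k:ℝ)+1))) := by
    rw [pow_succ]; ring
  rw [heq]
  calc (e k * q0 ^ k) * (q0 * ((A + k) * (B + k)) / (((k:ℝ)+1) * ((k:ℝ)+1)))
      ≤ (e k * q0 ^ k) * q' := by
        apply mul_le_mul_of_nonneg_left _ hek
        rw [div_le_iff₀ (by positivity)]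
        nlinarith
  _ = q' * (e k * q0 ^ k) := mul_comm _ _

set_option maxHeartbeats 2000000 in
/-- For `α > -1`, `β ∈ ℝ`, `λ` real nonzero: there is `C > 0` such that for `t ≥ 1`,
`Ψ_λ^(α,β)(t) = e^((iλ-ρ_{α,β})t)(1 + e^(-2t) Θ_λ(t))` with `|Θ_λ(t)| ≤ C`. -/
theorem stmt13 (α β : ℝ) (hα : -1 < α) (lam : ℝ) (hlam : lam ≠ 0) :
    ∃ C > (0:ℝ), ∀ t : ℝ, 1 ≤ t →
      ‖PsiJac α β (lam : ℂ) t *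
          Complex.exp (-((Complex.I * lam - ((α : ℂ) + β + 1)) * t)) - 1‖ ≤
        C * Real.exp (-2 * t) := by
  set a : ℂ := (((α : ℂ) + β + 1) - Complex.I * lam) / 2 with ha
  set b : ℂ := ((β : ℂ) - α + 1 - Complex.I * lam) / 2 with hb
  set c : ℂ := 1 - Complex.I * lam with hc
  set s : ℂ := Complex.I * lam - ((α : ℂ) + β + 1) with hs
  set A : ℝ := ‖a‖ with hA
  set B : ℝ := ‖b‖ with hB
  have hA0 : 0 ≤ A := norm_nonneg _
  have hB0 : 0 ≤ B := norm_nonneg _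
  have hsinh1 : 1 < Real.sinh 1 := by
    rw [Real.sinh_eq]
    have h1 : (2.7182818283 : ℝ) < Real.exp 1 := Real.exp_one_gt_d9
    have h2 : Real.exp (-1) = (Real.exp 1)⁻¹ := by
      rw [← Real.exp_neg]
    have h3 : Real.exp (-1) < 1/2 := by
      rw [h2]
      rw [inv_lt_comm₀ (by positivity) (by norm_num)]
      norm_num
      linarith
    linarith
  set q0 : ℝ := 1 / (Real.sinh 1)^2 with hq0
  have hq0pos : 0 < q0 := by positivity
  have hq0lt : q0 < 1 := by
    rw [hq0, div_lt_one (by positivity)]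
    nlinarith
  set q' : ℝ := (1 + q0)/2 with hq'
  have hq'lt : q' < 1 := by rw [hq']; linarith
  have hq0q' : q0 < q' := by rw [hq']; linarith
  -- coefficients and bounds
  set cf : ℕ → ℂ := fun k => eval a (ascPochhammer ℂ k) * eval b (ascPochhammer ℂ k) /
      (eval c (ascPochhammer ℂ k) * (k.factorial : ℂ)) with hcf
  set e : ℕ → ℝ := fun k => eval A (ascPochhammer ℝ k) * eval B (ascPochhammer ℝ k) /
      ((k.factorial : ℝ) * (k.factorial : ℝ)) with he
  have he0 : ∀ k, 0 ≤ e k := by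
    intro k
    apply div_nonneg (mul_nonneg (asc_nonneg _ hA0 _) (asc_nonneg _ hB0 _))
    positivity
  have hcfe : ∀ k, ‖cf k‖ ≤ e k := by
    intro k
    rw [hcf, he]
    simp only [norm_div, norm_mul]
    apply div_le_div₀ (mul_nonneg (asc_nonneg _ hA0 _) (asc_nonneg _ hB0 _))
      (mul_le_mul (norm_asc_le a k) (norm_asc_le b k) (norm_nonneg _)
        (asc_nonneg _ hA0 _))
      (by positivity)
    have h1 : (k.factorial : ℝ) ≤ ‖eval c (ascPochhammer ℂ k)‖ := norm_asc_c_ge lam k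
    have h2 : ‖((k.factorial : ℕ) : ℂ)‖ = (k.factorial : ℝ) := by
      simp
    rw [h2]
    exact mul_le_mul_of_nonneg_right h1 (by positivity)
  have herec : ∀ k : ℕ, e (k+1) = e k * ((A + k) * (B + k) / (((k:ℝ)+1) * ((k:ℝ)+1))) := by
    intro k
    rw [he]
    simp only [ascPochhammer_succ_right, eval_mul, eval_add, eval_X, eval_natCast,
      Nat.factorial_succ]
    push_cast
    have hk : (k.factorial : ℝ) ≠ 0 := by positivity
    field_simp
  -- summability of u k = e k * q0 ^ k
  have hu : Summable (fun k => e k * q0 ^ k) :=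
    summable_aux A B q0 q' hA0 hB0 hq0pos hq0q' hq'lt e he0 herec
  have hv : Summable (fun n => e (n+1) * q0 ^ n) := by
    have h1 : Summable (fun n => e (n+1) * q0 ^ (n+1)) := (summable_nat_add_iff 1).2 hu
    have h2 : (fun n => e (n+1) * q0 ^ n) = fun n => (e (n+1) * q0 ^ (n+1)) * q0⁻¹ := by
      funext n
      rw [pow_succ]
      field_simp
    rw [h2]
    exact h1.mul_right _
  set M : ℝ := ∑' n, e (n+1) * q0 ^ n with hM
  have hM0 : 0 ≤ M := tsum_nonneg (fun n => mul_nonneg (he0 _) (by positivity))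
  -- key estimate on F21
  have hF : ∀ z : ℂ, ‖z‖ ≤ q0 → ‖F21 a b c z - 1‖ ≤ M * ‖z‖ := by
    intro z hz
    have hterm : ∀ k, ‖cf k * z ^ k‖ ≤ e k * q0 ^ k := by
      intro k
      rw [norm_mul, norm_pow]
      exact mul_le_mul (hcfe k) (pow_le_pow_left₀ (norm_nonneg z) hz k)
        (by positivity) (he0 k)
    have hsum : Summable (fun k => cf k * z ^ k) :=
      Summable.of_norm_bounded hu hterm
    have hF21 : F21 a b c z = ∑' k, cf k * z ^ k := rfl
    rw [hF21, hsum.tsum_eq_zero_add]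
    have h0 : cf 0 * z ^ 0 = 1 := by
      rw [hcf]
      simp
    rw [h0, add_sub_cancel_left]
    have htermn : ∀ n, ‖cf (n+1) * z ^ (n+1)‖ ≤ e (n+1) * q0 ^ n * ‖z‖ := by
      intro n
      rw [norm_mul, norm_pow, pow_succ]
      calc ‖cf (n+1)‖ * (‖z‖ ^ n * ‖z‖) ≤ e (n+1) * (q0 ^ n * ‖z‖) := by
            apply mul_le_mul (hcfe _) _ (by positivity) (he0 _)
            exact mul_le_mul_of_nonneg_right (pow_le_pow_left₀ (norm_nonneg z) hz n)
              (norm_nonneg z)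
      _ = e (n+1) * q0 ^ n * ‖z‖ := by ring
    have hsumnorm : Summable (fun n => ‖cf (n+1) * z ^ (n+1)‖) :=
      ((summable_nat_add_iff 1).2 hsum).norm
    calc ‖∑' n, cf (n+1) * z ^ (n+1)‖ ≤ ∑' n, ‖cf (n+1) * z ^ (n+1)‖ :=
          norm_tsum_le_tsum_norm hsumnorm
    _ ≤ ∑' n, e (n+1) * q0 ^ n * ‖z‖ :=
          Summable.tsum_le_tsum htermn hsumnorm (hv.mul_right _)
    _ = M * ‖z‖ := tsum_mul_right
  -- numerical facts
  have hexp2 : (7:ℝ) < Real.exp 2 := by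
    have h1 : (2.7182818283 : ℝ) < Real.exp 1 := Real.exp_one_gt_d9
    have : Real.exp 2 = Real.exp 1 * Real.exp 1 := by
      rw [← Real.exp_add]; norm_num
    nlinarith
  refine ⟨2 * ‖s‖ * Real.exp ‖s‖ * (1 + M) + 8 * M + 1, by positivity, fun t ht => ?_⟩
  set x : ℝ := Real.exp (-2 * t) with hx
  have hx0 : 0 < x := Real.exp_pos _
  have hxe2 : x ≤ (Real.exp 2)⁻¹ := by
    rw [hx, ← Real.exp_neg]
    apply Real.exp_le_exp.2
    linarith
  have hx7 : x ≤ 1/7 := by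
    calc x ≤ (Real.exp 2)⁻¹ := hxe2
    _ ≤ 1/7 := by
      rw [inv_le_comm₀ (by linarith) (by norm_num)]
      linarith
  have h1x : 0 < 1 - x := by linarith
  have hsinht : Real.sinh 1 ≤ Real.sinh t := by
    apply Real.sinh_le_sinh.2 ht
  have hsinhpos : 0 < Real.sinh t := lt_of_lt_of_le (by linarith) hsinht
  -- the cpow identity
  have h2sinh : 2 * Real.sinh t = Real.exp t * (1 - x) := by
    rw [Real.sinh_eq, hx]
    have : Real.exp t * Real.exp (-2 * t) = Real.exp (-t) := by
      rw [← Real.exp_add]; ring_nf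
    nlinarith [this]
  have hlogr : Real.log (2 * Real.sinh t) = t + Real.log (1 - x) := by
    rw [h2sinh, Real.log_mul (Real.exp_ne_zero t) (ne_of_gt h1x), Real.log_exp]
  have h2spos : (0:ℝ) < 2 * Real.sinh t := by linarith
  have hne : ((2 * Real.sinh t : ℝ) : ℂ) ≠ 0 := by
    exact_mod_cast ne_of_gt h2spos
  have hkey : ((2 * Real.sinh t : ℝ) : ℂ) ^ s * Complex.exp (-(s * t))
      = Complex.exp ((Real.log (1 - x) : ℂ) * s) := by
    rw [Complex.cpow_def_of_ne_zero hne, ← Complex.exp_add]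
    congr 1
    rw [← Complex.ofReal_log (le_of_lt h2spos), hlogr]
    push_cast
    ring
  -- estimate ‖z‖
  set z : ℂ := -(1 / ((Real.sinh t : ℂ)) ^ 2) with hz
  have hnz : ‖z‖ = 1 / (Real.sinh t)^2 := by
    rw [hz, norm_neg, norm_div, norm_one, norm_pow, Complex.norm_real,
      Real.norm_of_nonneg (le_of_lt hsinhpos)]
  have hnzq0 : ‖z‖ ≤ q0 := by
    rw [hnz, hq0]
    apply div_le_div_of_nonneg_left zero_le_one (by positivity)
    apply pow_le_pow_left₀ (by linarith) hsinht
  have hnz8 : ‖z‖ ≤ 8 * x := by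
    rw [hnz]
    have hsb : Real.exp t * (1 - (1:ℝ)/7) ≤ 2 * Real.sinh t := by
      rw [h2sinh]
      apply mul_le_mul_of_nonneg_left (by linarith) (le_of_lt (Real.exp_pos t))
      -- 1 - 1/7 ≤ 1 - x
    have hsq : (Real.exp t)^2 * (6/7)^2 ≤ (2 * Real.sinh t)^2 := by
      calc (Real.exp t)^2 * (6/7)^2 = (Real.exp t * (1 - (1:ℝ)/7))^2 := by ring_nf
      _ ≤ _ := by
          apply pow_le_pow_left₀ (by positivity) hsb
    have hx_eq : x = (Real.exp t ^ 2)⁻¹ := by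
      rw [hx, show (-2*t) = -(2*t) by ring, Real.exp_neg]
      congr 1
      rw [two_mul, Real.exp_add, sq]
    have h8x : (8:ℝ) * x = 8 / (Real.exp t ^ 2) := by rw [hx_eq]; ring
    rw [h8x, div_le_div_iff₀ (by positivity) (by positivity)]
    nlinarith [hsq]
  -- estimate the prefactor
  set w : ℂ := (Real.log (1 - x) : ℂ) * s with hw
  have hlog1x : |Real.log (1 - x)| ≤ 2 * x := by
    have h1 : Real.log (1 - x) ≤ 0 := Real.log_nonpos (by linarith) (by linarith)
    have h2 : -Real.log (1 - x) = Real.log (1 - x)⁻¹ := by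
      rw [Real.log_inv]
    have h3 : Real.log (1 - x)⁻¹ ≤ (1 - x)⁻¹ - 1 :=
      Real.log_le_sub_one_of_pos (by positivity)
    have hmul : (1 - x)⁻¹ * (1 - x) = 1 := inv_mul_cancel₀ (ne_of_gt h1x)
    have h4 : (1 - x)⁻¹ - 1 ≤ 2 * x := by
      nlinarith [hmul, hx0, hx7, h1x, mul_pos hx0 hx0]
    rw [abs_of_nonpos h1]
    linarith [h2 ▸ h3]
  have hnw : ‖w‖ ≤ 2 * x * ‖s‖ := by
    rw [hw, norm_mul, Complex.norm_real, Real.norm_eq_abs]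
    exact mul_le_mul_of_nonneg_right hlog1x (norm_nonneg s)
  have hnw1 : ‖w‖ ≤ ‖s‖ := by
    calc ‖w‖ ≤ 2 * x * ‖s‖ := hnw
    _ ≤ 1 * ‖s‖ := by
        apply mul_le_mul_of_nonneg_right _ (norm_nonneg s)
        linarith
    _ = ‖s‖ := one_mul _
  have hP : ‖Complex.exp w - 1‖ ≤ 2 * x * ‖s‖ * Real.exp ‖s‖ := by
    calc ‖Complex.exp w - 1‖ ≤ ‖w‖ * Real.exp ‖w‖ := norm_cexp_sub_one_le w
    _ ≤ (2 * x * ‖s‖) * Real.exp ‖s‖ := by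
        apply mul_le_mul hnw (Real.exp_le_exp.2 hnw1) (by positivity)
        positivity
  -- final assembly
  have hFz := hF z hnzq0
  have hgoal : PsiJac α β (lam : ℂ) t * Complex.exp (-(s * t)) - 1
      = (Complex.exp w - 1) * F21 a b c z + (F21 a b c z - 1) := by
    rw [PsiJac, ← ha, ← hb, ← hc, ← hz]
    rw [mul_comm (((2 * Real.sinh t : ℝ) : ℂ) ^ s) (F21 a b c z), mul_assoc, hkey]
    ring
  have hFnorm : ‖F21 a b c z‖ ≤ 1 + M := by
    calc ‖F21 a b c z‖ = ‖(F21 a b c z - 1) + 1‖ := by ring_nf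
    _ ≤ ‖F21 a b c z - 1‖ + ‖(1:ℂ)‖ := norm_add_le _ _
    _ = ‖F21 a b c z - 1‖ + 1 := by rw [norm_one]
    _ ≤ M * ‖z‖ + 1 := by linarith
    _ ≤ 1 + M := by
        have : M * ‖z‖ ≤ M * 1 := by
          apply mul_le_mul_of_nonneg_left _ hM0
          calc ‖z‖ ≤ q0 := hnzq0
          _ ≤ 1 := le_of_lt hq0lt
        linarith
  have hMz : ‖F21 a b c z - 1‖ ≤ 8 * M * x := by
    calc ‖F21 a b c z - 1‖ ≤ M * ‖z‖ := hFz
    _ ≤ M * (8 * x) := mul_le_mul_of_nonneg_left hnz8 hM0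
    _ = 8 * M * x := by ring
  calc ‖PsiJac α β (lam : ℂ) t * Complex.exp (-(s * t)) - 1‖
      = ‖(Complex.exp w - 1) * F21 a b c z + (F21 a b c z - 1)‖ := by rw [hgoal]
  _ ≤ ‖Complex.exp w - 1‖ * ‖F21 a b c z‖ + ‖F21 a b c z - 1‖ := by
      calc _ ≤ ‖(Complex.exp w - 1) * F21 a b c z‖ + ‖F21 a b c z - 1‖ := norm_add_le _ _
      _ = _ := by rw [norm_mul]
  _ ≤ (2 * x * ‖s‖ * Real.exp ‖s‖) * (1 + M) + 8 * M * x := by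
      apply add_le_add _ hMz
      apply mul_le_mul hP hFnorm (norm_nonneg _) (by positivity)
  _ ≤ (2 * ‖s‖ * Real.exp ‖s‖ * (1 + M) + 8 * M + 1) * Real.exp (-2 * t) := by
      rw [← hx]
      nlinarith [hx0, norm_nonneg s, Real.exp_pos ‖s‖, hM0]
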